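/- Let (X, T) be a topological space, let {D_η : η < κ} ∪ {E_η : η < κ} be a family of pairwise disjoint dense subsets partitioning X, and let U be a nonempty open set. Let W := U ∩ ⋃_{η<κ} D_η and let T'' be the topology generated by T ∪ {W, X∖W}. Then for each η < κ, the set D_η ∪ E_η is dense in (X, T''). -/

import Mathlib

open Set TopologicalSpace

variable {X : Type*}

/-- The family `D : ι → Set X` witnesses `ι`-resolvability of the subspace `S` of `(X, T)`:
the `D i` are pairwise disjoint nonempty subsets of `S`, each dense in the subspace `S`
(equivalently `S ⊆ closure (D i)`). -/
def ResolvableFam (T : TopologicalSpace X) (S : Set X) (ι : Type*) : Prop :=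
  ∃ D : ι → Set X, (∀ i, D i ⊆ S) ∧ (∀ i, (D i).Nonempty) ∧
    (∀ i, S ⊆ @closure X T (D i)) ∧ (Pairwise fun i j => Disjoint (D i) (D j))

/-- A topology is quasi-regular if every nonempty open set contains the closure
of some nonempty open set. -/
def QuasiRegular (T : TopologicalSpace X) : Prop :=
  ∀ U : Set X, T.IsOpen U → U.Nonempty →
    ∃ V : Set X, T.IsOpen V ∧ V.Nonempty ∧ @closure X T V ⊆ U

theorem stmt6 [T : TopologicalSpace X] {ι : Type*} (D E : ι → Set X)
    (hdisj : Pairwise fun p q : ι ⊕ ι => Disjoint (Sum.elim D E p) (Sum.elim D E q))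
    (hDdense : ∀ η, Dense (D η)) (hEdense : ∀ η, Dense (E η))
    (hpart : ((⋃ η, D η) ∪ (⋃ η, E η)) = univ)
    (U : Set X) (hU : T.IsOpen U) (hUne : U.Nonempty)
    (W : Set X) (hW : W = U ∩ ⋃ η, D η)
    (T' : TopologicalSpace X)
    (hT : T' = TopologicalSpace.generateFrom ({s | T.IsOpen s} ∪ {W, Wᶜ})) :
    ∀ η, @Dense X T' (D η ∪ E η) := by
  intro η
  have hED : ∀ μ, Disjoint (E η) (D μ) := fun μ =>
    hdisj (show (Sum.inr η : ι ⊕ ι) ≠ Sum.inl μ by simp)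
  refine (@dense_iff_inter_open X T' (D η ∪ E η)).mpr ?_
  intro O hO hOne
  obtain ⟨x, hx⟩ := hOne
  rw [hT] at hO
  have key : ∀ O, GenerateOpen ({s | T.IsOpen s} ∪ {W, Wᶜ}) O → ∀ x ∈ O,
      ∃ V A, T.IsOpen V ∧ (A = univ ∨ A = W ∨ A = Wᶜ) ∧ x ∈ V ∩ A ∧ V ∩ A ⊆ O := by
    intro O hO
    induction hO with
    | basic s hs =>
      intro x hx
      rcases hs with hs | hs | hs
      · exact ⟨s, univ, hs, Or.inl rfl, ⟨hx, trivial⟩, fun y hy => hy.1⟩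
      · exact ⟨univ, s, T.isOpen_univ, Or.inr (Or.inl hs), ⟨trivial, hx⟩, fun y hy => hy.2⟩
      · rw [mem_singleton_iff] at hs
        exact ⟨univ, s, T.isOpen_univ, Or.inr (Or.inr hs), ⟨trivial, hx⟩, fun y hy => hy.2⟩
    | univ =>
      intro x _
      exact ⟨univ, univ, T.isOpen_univ, Or.inl rfl, ⟨trivial, trivial⟩, fun y _ => trivial⟩
    | inter a b _ _ iha ihb =>
      intro x hx
      obtain ⟨V₁, A₁, hV₁, hA₁, hx₁, hsub₁⟩ := iha x hx.1
      obtain ⟨V₂, A₂, hV₂, hA₂, hx₂, hsub₂⟩ := ihb x hx.2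
      refine ⟨V₁ ∩ V₂, A₁ ∩ A₂, T.isOpen_inter _ _ hV₁ hV₂, ?_, ⟨⟨hx₁.1, hx₂.1⟩, hx₁.2, hx₂.2⟩,
        fun y hy => ⟨hsub₁ ⟨hy.1.1, hy.2.1⟩, hsub₂ ⟨hy.1.2, hy.2.2⟩⟩⟩
      have h1 := hx₁.2
      have h2 := hx₂.2
      rcases hA₁ with rfl | rfl | rfl <;> rcases hA₂ with rfl | rfl | rfl <;>
        simp_all
    | sUnion S hS ih =>
      intro x hx
      obtain ⟨t, htS, hxt⟩ := hx
      obtain ⟨V, A, h1, h2, h3, h4⟩ := ih t htS x hxt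
      exact ⟨V, A, h1, h2, h3, fun y hy => ⟨t, htS, h4 hy⟩⟩
  obtain ⟨V, A, hV, hA, hxVA, hsub⟩ := key O hO x hx
  rcases hA with rfl | rfl | rfl
  · obtain ⟨y, hyD, hyV⟩ := @Dense.exists_mem_open X T _ (hDdense η) _ hV ⟨x, hxVA.1⟩
    exact ⟨y, hsub ⟨hyV, trivial⟩, Or.inl hyD⟩
  · have hVU : T.IsOpen (V ∩ U) := T.isOpen_inter _ _ hV hU
    have hne : (V ∩ U).Nonempty := ⟨x, hxVA.1, by rw [hW] at hxVA; exact hxVA.2.1⟩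
    obtain ⟨y, hyD, hyV⟩ := @Dense.exists_mem_open X T _ (hDdense η) _ hVU hne
    refine ⟨y, hsub ⟨hyV.1, ?_⟩, Or.inl hyD⟩
    rw [hW]; exact ⟨hyV.2, mem_iUnion.mpr ⟨η, hyD⟩⟩
  · obtain ⟨y, hyE, hyV⟩ := @Dense.exists_mem_open X T _ (hEdense η) _ hV ⟨x, hxVA.1⟩
    refine ⟨y, hsub ⟨hyV, ?_⟩, Or.inr hyE⟩
    rw [hW]
    intro hmem
    obtain ⟨μ, hμ⟩ := mem_iUnion.mp hmem.2
    exact (hED μ).le_bot ⟨hyE, hμ⟩
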